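/- For the normalized matrix of maximum out-forests J̄ of a weighted digraph, for all vertices i, j: J̄_{ii} ≥ J̄_{ji}, and if J̄_{ij} > 0 then J̄_{ii} = J̄_{ji}. -/

import Mathlib

open Finset

variable {n : ℕ}

/-- Kirchhoff (Laplacian) matrix of the weighted digraph whose arc `(j, i)`
has weight `a i j` (so `a i j` is the weight with which agent `i` accounts for `j`). -/
noncomputable def kirchhoff (a : Matrix (Fin n) (Fin n) ℝ) : Matrix (Fin n) (Fin n) ℝ :=
  Matrix.of fun i j => if i = j then ∑ k ∈ Finset.univ.erase i, a i k else -a i j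

/-- `F` is a spanning diverging forest (out-forest) of the digraph with arcs
`u → v` present iff `a v u > 0`: every arc of `F` is an arc of the digraph,
every vertex has in-degree at most one in `F`, and `F` has no directed cycles
(equivalently, no infinite directed walk). -/
def IsOutForest (a : Matrix (Fin n) (Fin n) ℝ) (F : Finset (Fin n × Fin n)) : Prop :=
  (∀ e ∈ F, 0 < a e.2 e.1) ∧
  (∀ u u' v : Fin n, (u, v) ∈ F → (u', v) ∈ F → u = u') ∧
  ¬ ∃ f : ℕ → Fin n, ∀ k, (f k, f (k + 1)) ∈ F

/-- Number of arcs of a maximum out-forest. -/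
noncomputable def maxForestSize (a : Matrix (Fin n) (Fin n) ℝ) : ℕ :=
  sSup {k | ∃ F, IsOutForest a F ∧ F.card = k}

/-- The out-forest dimension: the number of trees in any maximum out-forest. -/
noncomputable def outForestDim (a : Matrix (Fin n) (Fin n) ℝ) : ℕ :=
  n - maxForestSize a

open Classical in
/-- The set of maximum out-forests. -/
noncomputable def maxForests (a : Matrix (Fin n) (Fin n) ℝ) :
    Finset (Finset (Fin n × Fin n)) :=
  Finset.univ.filter fun F => IsOutForest a F ∧ F.card = maxForestSize a

/-- The weight of a forest: the product of its arc weights. -/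
def forestWeight (a : Matrix (Fin n) (Fin n) ℝ) (F : Finset (Fin n × Fin n)) : ℝ :=
  ∏ e ∈ F, a e.2 e.1

/-- In forest `F`, vertex `i` belongs to the tree diverging from (rooted at) `j`. -/
def InTreeRootedAt (F : Finset (Fin n × Fin n)) (j i : Fin n) : Prop :=
  (∀ u, (u, j) ∉ F) ∧ Relation.ReflTransGen (fun x y => (x, y) ∈ F) j i

open Classical in
/-- The normalized matrix of maximum out-forests. -/
noncomputable def barJ (a : Matrix (Fin n) (Fin n) ℝ) : Matrix (Fin n) (Fin n) ℝ :=
  Matrix.of fun i j =>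
    (∑ F ∈ (maxForests a).filter (fun F => InTreeRootedAt F j i), forestWeight a F) /
    (∑ F ∈ maxForests a, forestWeight a F)

/-- Reachability by directed paths (arc `u → v` present iff `a v u > 0`). -/
def Reach (a : Matrix (Fin n) (Fin n) ℝ) (u v : Fin n) : Prop :=
  Relation.ReflTransGen (fun x y => 0 < a y x) u v

/-- The strong component (bicomponent) of vertex `v`. -/
def strongClass (a : Matrix (Fin n) (Fin n) ℝ) (v : Fin n) : Set (Fin n) :=
  {u | Reach a u v ∧ Reach a v u}

/-- The set of strong components. -/
def strongClasses (a : Matrix (Fin n) (Fin n) ℝ) : Set (Set (Fin n)) :=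
  {S | ∃ v, S = strongClass a v}

/-- Basis bicomponents: strong components with no arcs entering from outside. -/
def basisClasses (a : Matrix (Fin n) (Fin n) ℝ) : Set (Set (Fin n)) :=
  {S | (∃ v, S = strongClass a v) ∧ ∀ u v, u ∉ S → v ∈ S → ¬ 0 < a v u}

/-- Weak reachability (underlying undirected graph). -/
def WeakReach (a : Matrix (Fin n) (Fin n) ℝ) (u v : Fin n) : Prop :=
  Relation.ReflTransGen (fun x y => 0 < a y x ∨ 0 < a x y) u v

/-- The set of weak components. -/
def weakClasses (a : Matrix (Fin n) (Fin n) ℝ) : Set (Set (Fin n)) :=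
  {S | ∃ v, S = {u | WeakReach a u v}}


/-! ### Auxiliary lemmas -/

open scoped Classical

section Aux

variable (a : Matrix (Fin n) (Fin n) ℝ)

lemma forestWeight_pos {F : Finset (Fin n × Fin n)} (hF : IsOutForest a F) :
    0 < forestWeight a F :=
  Finset.prod_pos fun e he => hF.1 e he

lemma forest_size_bddAbove : BddAbove {k | ∃ F, IsOutForest a F ∧ F.card = k} := by
  refine ⟨n * n, ?_⟩
  rintro k ⟨F, -, rfl⟩
  calc F.card ≤ (Finset.univ : Finset (Fin n × Fin n)).card :=
        Finset.card_le_card (Finset.subset_univ F)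
    _ = n * n := by simp

lemma isOutForest_empty : IsOutForest a (∅ : Finset (Fin n × Fin n)) := by
  refine ⟨fun e he => absurd he (Finset.notMem_empty e),
    fun u u' v h _ => absurd h (Finset.notMem_empty _), ?_⟩
  rintro ⟨f, hf⟩
  exact absurd (hf 0) (Finset.notMem_empty _)

lemma exists_maxForest : ∃ F, IsOutForest a F ∧ F.card = maxForestSize a := by
  have h1 : (0 : ℕ) ∈ {k | ∃ F, IsOutForest a F ∧ F.card = k} :=
    ⟨∅, isOutForest_empty a, by simp⟩
  have h2 := Nat.sSup_mem ⟨0, h1⟩ (forest_size_bddAbove a)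
  exact h2

lemma card_le_maxForestSize {F : Finset (Fin n × Fin n)} (hF : IsOutForest a F) :
    F.card ≤ maxForestSize a :=
  le_csSup (forest_size_bddAbove a) ⟨F, hF, rfl⟩

lemma no_backward_chain {F : Finset (Fin n × Fin n)} (hF : IsOutForest a F)
    (g : ℕ → Fin n) (hg : ∀ k, (g (k + 1), g k) ∈ F) : False := by
  have key : ∀ A B : ℕ, A < B → g A = g B → False := by
    intro A B hAB hg2
    set m := B - A with hm
    have hm1 : 0 < m := by omega
    apply hF.2.2
    refine ⟨fun t => g (B - t % m), fun t => ?_⟩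
    show (g (B - t % m), g (B - (t + 1) % m)) ∈ F
    have hs : t % m < m := Nat.mod_lt _ hm1
    rcases Nat.lt_or_ge (t % m + 1) m with h1 | h1
    · have h2 : (t + 1) % m = t % m + 1 := by
        rw [← Nat.mod_add_mod, Nat.mod_eq_of_lt h1]
      rw [h2]
      have h3 : B - (t % m + 1) + 1 = B - t % m := by omega
      have := hg (B - (t % m + 1))
      rwa [h3] at this
    · have hmeq : t % m + 1 = m := by omega
      have h2 : (t + 1) % m = 0 := by
        rw [← Nat.mod_add_mod, hmeq, Nat.mod_self]
      rw [h2]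
      have h3 : B - t % m = A + 1 := by omega
      have h4 : B - 0 = B := by omega
      rw [h3, h4, ← hg2]
      exact hg A
  obtain ⟨x, y, hxy, hmap⟩ := Finite.exists_ne_map_eq_of_infinite g
  rcases hxy.lt_or_gt with h | h
  · exact key x y h hmap
  · exact key y x h hmap.symm

lemma exists_root {F : Finset (Fin n × Fin n)} (hF : IsOutForest a F) (v : Fin n) :
    ∃ r, (∀ u, (u, r) ∉ F) ∧ Relation.ReflTransGen (fun x y => (x, y) ∈ F) r v := by
  by_contra hcon
  push_neg at hcon
  have step : ∀ u, Relation.ReflTransGen (fun x y => (x, y) ∈ F) u v →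
      ∃ w, (w, u) ∈ F ∧ Relation.ReflTransGen (fun x y => (x, y) ∈ F) w v := by
    intro u hu
    have h2 : ∃ w, (w, u) ∈ F := by
      by_contra h3
      push_neg at h3
      exact (hcon u h3) hu
    obtain ⟨w, hw⟩ := h2
    exact ⟨w, hw, Relation.ReflTransGen.head hw hu⟩
  choose next h1 h2 using step
  let g : ℕ → {u : Fin n // Relation.ReflTransGen (fun x y => (x, y) ∈ F) u v} :=
    fun k => Nat.rec ⟨v, Relation.ReflTransGen.refl⟩
      (fun _ p => ⟨next p.1 p.2, h2 p.1 p.2⟩) k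
  exact no_backward_chain a hF (fun k => (g k).1) (fun k => h1 (g k).1 (g k).2)

lemma root_unique {F : Finset (Fin n × Fin n)} (hF : IsOutForest a F) {r r' : Fin n}
    (hr : ∀ u, (u, r) ∉ F) (hr' : ∀ u, (u, r') ∉ F) :
    ∀ v : Fin n, Relation.ReflTransGen (fun x y => (x, y) ∈ F) r v →
      Relation.ReflTransGen (fun x y => (x, y) ∈ F) r' v → r = r' := by
  intro v h1
  induction h1 with
  | refl =>
    intro h2
    rcases Relation.ReflTransGen.cases_tail h2 with heq | ⟨c, -, hc⟩
    · exact heq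
    · exact absurd hc (hr c)
  | @tail b c hrb harc ih =>
    intro h2
    rcases Relation.ReflTransGen.cases_tail h2 with heq | ⟨u', h', hu'⟩
    · subst heq
      exact absurd harc (hr' b)
    · have heq := hF.2.1 b u' c harc hu'
      exact ih (heq ▸ h')

lemma reach_of_mem_forest {F : Finset (Fin n × Fin n)} (hF : IsOutForest a F) {u v : Fin n}
    (h : Relation.ReflTransGen (fun x y => (x, y) ∈ F) u v) : Reach a u v :=
  Relation.ReflTransGen.mono (fun x y hxy => hF.1 (x, y) hxy) _ _ h

/-- The roots (vertices of in-degree zero) of a forest. -/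
noncomputable def rootsOf (F : Finset (Fin n × Fin n)) : Finset (Fin n) :=
  Finset.univ.filter fun v => ∀ u, (u, v) ∉ F

lemma mem_rootsOf {F : Finset (Fin n × Fin n)} {v : Fin n} :
    v ∈ rootsOf F ↔ ∀ u, (u, v) ∉ F := by
  simp [rootsOf]

lemma card_rootsOf_add {F : Finset (Fin n × Fin n)} (hF : IsOutForest a F) :
    (rootsOf F).card + F.card = n := by
  have himg : F.image Prod.snd = (rootsOf F)ᶜ := by
    ext v
    simp only [Finset.mem_image, Finset.mem_compl, mem_rootsOf, not_forall, not_not]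
    constructor
    · rintro ⟨e, he, rfl⟩
      exact ⟨e.1, by simpa using he⟩
    · rintro ⟨u, hu⟩
      exact ⟨(u, v), hu, rfl⟩
  have hcard : F.card = (rootsOf F)ᶜ.card := by
    rw [← himg]
    refine (Finset.card_image_of_injOn ?_).symm
    intro e1 he1 e2 he2 hsnd
    have : e1.1 = e2.1 := hF.2.1 e1.1 e2.1 e1.2 (by simpa using he1) (by rw [hsnd]; simpa using he2)
    exact Prod.ext this hsnd
  have := Finset.card_add_card_compl (rootsOf F)
  simp only [Fintype.card_fin] at this
  omega

/-- The canonical (minimal) representative of the strong class of `v`. -/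
noncomputable def canonV (a : Matrix (Fin n) (Fin n) ℝ) (v : Fin n) : Fin n :=
  (Finset.univ.filter fun u => Reach a u v ∧ Reach a v u).min'
    ⟨v, Finset.mem_filter.mpr ⟨Finset.mem_univ v,
      Relation.ReflTransGen.refl, Relation.ReflTransGen.refl⟩⟩

lemma canon_spec (v : Fin n) : Reach a (canonV a v) v ∧ Reach a v (canonV a v) := by
  have h := Finset.min'_mem (Finset.univ.filter fun u => Reach a u v ∧ Reach a v u)
    ⟨v, Finset.mem_filter.mpr ⟨Finset.mem_univ v,
      Relation.ReflTransGen.refl, Relation.ReflTransGen.refl⟩⟩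
  rw [Finset.mem_filter] at h
  exact h.2

lemma canon_le {u v : Fin n} (h1 : Reach a u v) (h2 : Reach a v u) : canonV a v ≤ u := by
  unfold canonV
  exact Finset.min'_le _ _ (Finset.mem_filter.mpr ⟨Finset.mem_univ _, h1, h2⟩)

lemma canon_congr {v w : Fin n} (h1 : Reach a v w) (h2 : Reach a w v) :
    canonV a v = canonV a w := by
  apply le_antisymm
  · exact canon_le a ((canon_spec a w).1.trans h2) (h1.trans (canon_spec a w).2)
  · exact canon_le a ((canon_spec a v).1.trans h1) (h2.trans (canon_spec a v).2)

/-- `v` lies in a basis bicomponent. -/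
def isBasisV (a : Matrix (Fin n) (Fin n) ℝ) (v : Fin n) : Prop :=
  ∀ u, Reach a u v → Reach a v u

lemma basis_mutual {v w : Fin n} (hv : isBasisV a v) (h1 : Reach a v w) (h2 : Reach a w v) :
    isBasisV a w := by
  intro u hu
  exact h2.trans (hv u (hu.trans h2))

lemma exists_basis_reach_aux : ∀ (N : ℕ) (u : Fin n),
    (Finset.univ.filter fun x => Reach a x u).card ≤ N →
    ∃ v, isBasisV a v ∧ Reach a v u := by
  intro N
  induction N with
  | zero =>
    intro u h
    exfalso
    have hu : u ∈ Finset.univ.filter fun x => Reach a x u :=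
      Finset.mem_filter.mpr ⟨Finset.mem_univ _, Relation.ReflTransGen.refl⟩
    have := Finset.card_pos.mpr ⟨u, hu⟩
    omega
  | succ N ih =>
    intro u h
    by_cases hb : isBasisV a u
    · exact ⟨u, hb, Relation.ReflTransGen.refl⟩
    · unfold isBasisV at hb
      push_neg at hb
      obtain ⟨w, hw1, hw2⟩ := hb
      have hsub : (Finset.univ.filter fun x => Reach a x w) ⊂
          (Finset.univ.filter fun x => Reach a x u) := by
        constructor
        · intro x hx
          simp only [Finset.mem_filter] at hx ⊢
          exact ⟨hx.1, hx.2.trans hw1⟩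
        · intro hsub'
          have : u ∈ Finset.univ.filter fun x => Reach a x w :=
            hsub' (Finset.mem_filter.mpr ⟨Finset.mem_univ _, Relation.ReflTransGen.refl⟩)
          exact hw2 (Finset.mem_filter.mp this).2
      have hlt := Finset.card_lt_card hsub
      obtain ⟨v, hv1, hv2⟩ := ih w (by omega)
      exact ⟨v, hv1, hv2.trans hw1⟩

lemma exists_basis_reach (u : Fin n) : ∃ v, isBasisV a v ∧ Reach a v u :=
  exists_basis_reach_aux a _ u le_rfl

/-- A set of representatives, one per basis bicomponent. -/
noncomputable def basisReps (a : Matrix (Fin n) (Fin n) ℝ) : Finset (Fin n) :=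
  (Finset.univ.filter (isBasisV a)).image (canonV a)

lemma mem_basisReps {s : Fin n} (hs : s ∈ basisReps a) :
    isBasisV a s ∧ canonV a s = s := by
  simp only [basisReps, Finset.mem_image, Finset.mem_filter] at hs
  obtain ⟨v, ⟨-, hv⟩, rfl⟩ := hs
  exact ⟨basis_mutual a hv (canon_spec a v).2 (canon_spec a v).1,
    canon_congr a (canon_spec a v).1 (canon_spec a v).2⟩

lemma exists_rep_reach (u : Fin n) : ∃ s ∈ basisReps a, Reach a s u := by
  obtain ⟨v, hv1, hv2⟩ := exists_basis_reach a u
  refine ⟨canonV a v, ?_, (canon_spec a v).1.trans hv2⟩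
  exact Finset.mem_image_of_mem _ (Finset.mem_filter.mpr ⟨Finset.mem_univ _, hv1⟩)

end Aux

/-- Reachable from `S` in exactly `k` steps. -/
def reachStep (a : Matrix (Fin n) (Fin n) ℝ) (S : Finset (Fin n)) : ℕ → Fin n → Prop
  | 0, u => u ∈ S
  | k + 1, u => ∃ p, 0 < a u p ∧ reachStep a S k p

section Aux2

variable (a : Matrix (Fin n) (Fin n) ℝ)

lemma reachStep_exists (S : Finset (Fin n)) (h : ∀ u, ∃ s ∈ S, Reach a s u) :
    ∀ u, ∃ k, reachStep a S k u := by
  intro u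
  obtain ⟨s, hs, hr⟩ := h u
  induction hr with
  | refl => exact ⟨0, hs⟩
  | @tail b c hrb harc ih =>
    obtain ⟨k, hk⟩ := ih
    exact ⟨k + 1, b, harc, hk⟩

lemma exists_big_forest : ∃ F, IsOutForest a F ∧ F.card = n - (basisReps a).card := by
  classical
  have hex : ∀ u, ∃ k, reachStep a (basisReps a) k u :=
    reachStep_exists a _ (exists_rep_reach a)
  have hstep : ∀ u, u ∉ basisReps a →
      ∃ p, 0 < a u p ∧ Nat.find (hex p) < Nat.find (hex u) := by
    intro u hu
    have h0 : Nat.find (hex u) ≠ 0 := by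
      intro h
      have := Nat.find_spec (hex u)
      rw [h] at this
      exact hu this
    obtain ⟨m, hm⟩ : ∃ m, Nat.find (hex u) = m + 1 :=
      ⟨Nat.find (hex u) - 1, by omega⟩
    have hspec := Nat.find_spec (hex u)
    rw [hm] at hspec
    obtain ⟨p, hp1, hp2⟩ := hspec
    refine ⟨p, hp1, ?_⟩
    have := Nat.find_min' (hex p) hp2
    omega
  choose! par hpar1 hpar2 using hstep
  refine ⟨((Finset.univ : Finset (Fin n)).filter (· ∉ basisReps a)).image
    (fun u => (par u, u)), ⟨?_, ?_, ?_⟩, ?_⟩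
  · intro e he
    simp only [Finset.mem_image, Finset.mem_filter] at he
    obtain ⟨u, ⟨-, hu⟩, rfl⟩ := he
    exact hpar1 u hu
  · intro u u' v h h'
    simp only [Finset.mem_image, Finset.mem_filter] at h h'
    obtain ⟨w, ⟨-, hw⟩, heq⟩ := h
    obtain ⟨w', ⟨-, hw'⟩, heq'⟩ := h'
    have h1 : w = v := (Prod.mk.injEq _ _ _ _ ▸ heq).2
    have h2 : w' = v := (Prod.mk.injEq _ _ _ _ ▸ heq').2
    have h3 : par w = u := (Prod.mk.injEq _ _ _ _ ▸ heq).1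
    have h4 : par w' = u' := (Prod.mk.injEq _ _ _ _ ▸ heq').1
    rw [← h3, ← h4, h1, h2]
  · rintro ⟨f, hf⟩
    have key : ∀ k, Nat.find (hex (f k)) < Nat.find (hex (f (k + 1))) := by
      intro k
      have := hf k
      simp only [Finset.mem_image, Finset.mem_filter] at this
      obtain ⟨w, ⟨-, hw⟩, heq⟩ := this
      have h1 : w = f (k + 1) := (Prod.mk.injEq _ _ _ _ ▸ heq).2
      have h2 : par w = f k := (Prod.mk.injEq _ _ _ _ ▸ heq).1
      subst h1
      rw [← h2]
      exact hpar2 _ hw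
    have hmono : StrictMono (fun k => Nat.find (hex (f k))) :=
      strictMono_nat_of_lt_succ key
    obtain ⟨x, y, hxy, hmap⟩ := Finite.exists_ne_map_eq_of_infinite f
    exact hxy (hmono.injective (by simp [hmap]))
  · rw [Finset.card_image_of_injOn (fun x _ y _ h => (Prod.mk.injEq _ _ _ _ ▸ h).2)]
    have : ((Finset.univ : Finset (Fin n)).filter (· ∉ basisReps a)) = (basisReps a)ᶜ := by
      ext x; simp
    rw [this, Finset.card_compl, Fintype.card_fin]

/-- The root of the tree of `v` in forest `F`. -/
noncomputable def forestRoot (F : Finset (Fin n × Fin n)) (v : Fin n) : Fin n :=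
  if h : ∃ r, (∀ u, (u, r) ∉ F) ∧ Relation.ReflTransGen (fun x y => (x, y) ∈ F) r v
  then h.choose else v

lemma forestRoot_spec {F : Finset (Fin n × Fin n)} (hF : IsOutForest a F) (v : Fin n) :
    (∀ u, (u, forestRoot F v) ∉ F) ∧
      Relation.ReflTransGen (fun x y => (x, y) ∈ F) (forestRoot F v) v := by
  rw [forestRoot, dif_pos (exists_root a hF v)]
  exact (exists_root a hF v).choose_spec

lemma forestRoot_injOn {F : Finset (Fin n × Fin n)} (hF : IsOutForest a F) :
    Set.InjOn (forestRoot F) ↑(basisReps a) := by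
  intro s hs s' hs' heq
  rw [Finset.mem_coe] at hs hs'
  have h1 := forestRoot_spec a hF s
  have h2 := forestRoot_spec a hF s'
  have m1 : Reach a (forestRoot F s) s := reach_of_mem_forest a hF h1.2
  have m2 : Reach a (forestRoot F s') s' := reach_of_mem_forest a hF h2.2
  have m1' : Reach a s (forestRoot F s) := (mem_basisReps a hs).1 _ m1
  have m2' : Reach a s' (forestRoot F s') := (mem_basisReps a hs').1 _ m2
  have m2'' : Reach a (forestRoot F s) s' := heq ▸ m2
  have m1'' : Reach a s' (forestRoot F s) := heq ▸ m2'
  have hss' : Reach a s s' := m1'.trans m2''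
  have hs's : Reach a s' s := m1''.trans m1
  have := canon_congr a hss' hs's
  rw [(mem_basisReps a hs).2, (mem_basisReps a hs').2] at this
  exact this

lemma basisReps_card_le_rootsOf {F : Finset (Fin n × Fin n)} (hF : IsOutForest a F) :
    (basisReps a).card ≤ (rootsOf F).card := by
  apply Finset.card_le_card_of_injOn (forestRoot F)
  · intro s hs
    exact mem_rootsOf.mpr (forestRoot_spec a hF s).1
  · exact forestRoot_injOn a hF

lemma maxForestSize_eq : maxForestSize a = n - (basisReps a).card := by
  apply le_antisymm
  · have h1 : (0 : ℕ) ∈ {k | ∃ F, IsOutForest a F ∧ F.card = k} :=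
      ⟨∅, isOutForest_empty a, by simp⟩
    apply csSup_le ⟨0, h1⟩
    rintro k ⟨F, hF, rfl⟩
    have h1 := card_rootsOf_add a hF
    have h2 := basisReps_card_le_rootsOf a hF
    omega
  · obtain ⟨F, hF, hc⟩ := exists_big_forest a
    exact hc ▸ card_le_maxForestSize a hF

lemma rootsOf_card_of_max {F : Finset (Fin n × Fin n)} (hF : IsOutForest a F)
    (hc : F.card = maxForestSize a) : (rootsOf F).card = (basisReps a).card := by
  have h1 := card_rootsOf_add a hF
  have h2 := basisReps_card_le_rootsOf a hF
  have h3 := maxForestSize_eq a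
  have h4 : (basisReps a).card ≤ n := by
    simpa using Finset.card_le_univ (basisReps a)
  omega

lemma rootsOf_eq_image {F : Finset (Fin n × Fin n)} (hF : IsOutForest a F)
    (hc : F.card = maxForestSize a) :
    (basisReps a).image (forestRoot F) = rootsOf F := by
  apply Finset.eq_of_subset_of_card_le
  · intro r hr
    obtain ⟨s, hs, rfl⟩ := Finset.mem_image.mp hr
    exact mem_rootsOf.mpr (forestRoot_spec a hF s).1
  · rw [Finset.card_image_of_injOn (forestRoot_injOn a hF),
      rootsOf_card_of_max a hF hc]

lemma root_mutual_rep {F : Finset (Fin n × Fin n)} (hF : IsOutForest a F)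
    (hc : F.card = maxForestSize a) {r : Fin n} (hr : r ∈ rootsOf F) :
    ∃ s ∈ basisReps a, Reach a r s ∧ Reach a s r := by
  rw [← rootsOf_eq_image a hF hc] at hr
  obtain ⟨s, hs, rfl⟩ := Finset.mem_image.mp hr
  have h := forestRoot_spec a hF s
  have m1 : Reach a (forestRoot F s) s := reach_of_mem_forest a hF h.2
  exact ⟨s, hs, m1, (mem_basisReps a hs).1 _ m1⟩

lemma root_basis_of_max {F : Finset (Fin n × Fin n)} (hF : IsOutForest a F)
    (hc : F.card = maxForestSize a) {r : Fin n} (hr : r ∈ rootsOf F) :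
    isBasisV a r := by
  obtain ⟨s, hs, hrs, hsr⟩ := root_mutual_rep a hF hc hr
  exact basis_mutual a (mem_basisReps a hs).1 hsr hrs

lemma root_eq_of_mutual {F : Finset (Fin n × Fin n)} (hF : IsOutForest a F)
    (hc : F.card = maxForestSize a) {r1 r2 : Fin n}
    (h1 : r1 ∈ rootsOf F) (h2 : r2 ∈ rootsOf F)
    (m12 : Reach a r1 r2) (m21 : Reach a r2 r1) : r1 = r2 := by
  rw [← rootsOf_eq_image a hF hc] at h1 h2
  obtain ⟨t1, ht1, hteq1⟩ := Finset.mem_image.mp h1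
  obtain ⟨t2, ht2, hteq2⟩ := Finset.mem_image.mp h2
  subst hteq1; subst hteq2
  -- mutual reachability between t1 and its forest root
  have e1 : Reach a (forestRoot F t1) t1 :=
    reach_of_mem_forest a hF (forestRoot_spec a hF t1).2
  have e2 : Reach a (forestRoot F t2) t2 :=
    reach_of_mem_forest a hF (forestRoot_spec a hF t2).2
  have e1' : Reach a t1 (forestRoot F t1) := (mem_basisReps a ht1).1 _ e1
  have e2' : Reach a t2 (forestRoot F t2) := (mem_basisReps a ht2).1 _ e2
  have htt : Reach a t1 t2 := (e1'.trans m12).trans e2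
  have htt' : Reach a t2 t1 := (e2'.trans m21).trans e1
  have hcc := canon_congr a htt htt'
  rw [(mem_basisReps a ht1).2, (mem_basisReps a ht2).2] at hcc
  rw [hcc]

lemma key_lemma {F G : Finset (Fin n × Fin n)} (hF : IsOutForest a F)
    (hFc : F.card = maxForestSize a) (hG : IsOutForest a G)
    (hGc : G.card = maxForestSize a) {i j : Fin n}
    (hi : ∀ u, (u, i) ∉ F) (hj : ∀ u, (u, j) ∉ G)
    (hji : Relation.ReflTransGen (fun x y => (x, y) ∈ G) j i) :
    Relation.ReflTransGen (fun x y => (x, y) ∈ F) i j := by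
  have hreach_ji : Reach a j i := reach_of_mem_forest a hG hji
  have hjb : isBasisV a j :=
    root_basis_of_max a hG hGc (mem_rootsOf.mpr hj)
  have hib : isBasisV a i :=
    root_basis_of_max a hF hFc (mem_rootsOf.mpr hi)
  have hij : Reach a i j := hib j hreach_ji
  have hspec := forestRoot_spec a hF j
  have hr_reach : Reach a (forestRoot F j) j := reach_of_mem_forest a hF hspec.2
  have hjr : Reach a j (forestRoot F j) := hjb _ hr_reach
  have heq : i = forestRoot F j :=
    root_eq_of_mutual a hF hFc (mem_rootsOf.mpr hi) (mem_rootsOf.mpr hspec.1)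
      (hij.trans hjr) (hr_reach.trans hreach_ji)
  exact heq ▸ hspec.2

lemma mem_maxForests {F : Finset (Fin n × Fin n)} :
    F ∈ maxForests a ↔ IsOutForest a F ∧ F.card = maxForestSize a := by
  simp [maxForests]

lemma denom_pos : 0 < ∑ F ∈ maxForests a, forestWeight a F := by
  apply Finset.sum_pos
  · intro F hFm
    exact forestWeight_pos a ((mem_maxForests a).mp hFm).1
  · obtain ⟨F, hF, hc⟩ := exists_maxForest a
    exact ⟨F, (mem_maxForests a).mpr ⟨hF, hc⟩⟩

end Aux2

/-- For all vertices `i, j`: `J̄_{ii} ≥ J̄_{ji}`, and if `J̄_{ij} > 0` then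
`J̄_{ii} = J̄_{ji}`. -/
theorem barJ_diag_dominance {n : ℕ} (a : Matrix (Fin n) (Fin n) ℝ)
    (hnn : ∀ i j, 0 ≤ a i j) (i j : Fin n) :
    barJ a j i ≤ barJ a i i ∧ (0 < barJ a i j → barJ a i i = barJ a j i) := by
  classical
  have hD : 0 < ∑ F ∈ maxForests a, forestWeight a F := denom_pos a
  constructor
  · -- part 1 : subset of filters
    simp only [barJ, Matrix.of_apply]
    have hsub : (maxForests a).filter (fun F => InTreeRootedAt F i j) ⊆
        (maxForests a).filter (fun F => InTreeRootedAt F i i) := by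
      intro F hFm
      rw [Finset.mem_filter] at hFm ⊢
      exact ⟨hFm.1, hFm.2.1, Relation.ReflTransGen.refl⟩
    have hnum : (∑ F ∈ (maxForests a).filter (fun F => InTreeRootedAt F i j),
          forestWeight a F)
        ≤ ∑ F ∈ (maxForests a).filter (fun F => InTreeRootedAt F i i),
          forestWeight a F := by
      apply Finset.sum_le_sum_of_subset_of_nonneg hsub
      intro F hFm _
      exact le_of_lt (forestWeight_pos a
        ((mem_maxForests a).mp (Finset.mem_filter.mp hFm).1).1)
    rw [div_eq_mul_inv, div_eq_mul_inv]
    exact mul_le_mul_of_nonneg_right hnum (inv_nonneg.mpr hD.le)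
  · intro hpos
    have hne : ((maxForests a).filter (fun F => InTreeRootedAt F j i)).Nonempty := by
      rcases Finset.eq_empty_or_nonempty
        ((maxForests a).filter (fun F => InTreeRootedAt F j i)) with h | h
      · exfalso
        simp only [barJ, Matrix.of_apply, h, Finset.sum_empty, zero_div] at hpos
        exact lt_irrefl 0 hpos
      · exact h
    obtain ⟨G, hGf⟩ := hne
    rw [Finset.mem_filter] at hGf
    have hG := (mem_maxForests a).mp hGf.1
    have hset : (maxForests a).filter (fun F => InTreeRootedAt F i i) =
        (maxForests a).filter (fun F => InTreeRootedAt F i j) := by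
      apply Finset.filter_congr
      intro F hFm
      have hF := (mem_maxForests a).mp hFm
      constructor
      · rintro ⟨hroot, -⟩
        exact ⟨hroot, key_lemma a hF.1 hF.2 hG.1 hG.2 hroot hGf.2.1 hGf.2.2⟩
      · rintro ⟨hroot, -⟩
        exact ⟨hroot, Relation.ReflTransGen.refl⟩
    simp only [barJ, Matrix.of_apply]
    rw [hset]
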